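/- Let M and N be chain complexes of R-modules such that N_n lies in the subprojectivity domain of M_n for every integer n. If there exists a short exact sequence of complexes 0 → K → P → N → 0 with P a projective complex such that every chain map M[-1] → K is null-homotopic, then N lies in the subprojectivity domain of M in the category of complexes. -/

import Mathlib

open CategoryTheory CategoryTheory.Limits

universe u

/-- `N` belongs to the subprojectivity domain of `M`: every morphism `M ⟶ N` factors
through a projective object. -/
def SubprojDomain {A : Type*} [Category A] (M N : A) : Prop :=
  ∀ f : M ⟶ N, ∃ (P : A) (_ : Projective P) (a : M ⟶ P) (b : P ⟶ N), a ≫ b = f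

/-- The shift `M[-1]` of a chain complex: `M[-1]ᵢ = M_{i+1}` with differential `-d`. -/
def shiftNegOne {R : Type u} [Ring R] (M : ChainComplex (ModuleCat.{u} R) ℤ) :
    ChainComplex (ModuleCat.{u} R) ℤ where
  X i := M.X (i + 1)
  d i j := -(M.d (i + 1) (j + 1))
  shape i j h := by
    have : ¬ (ComplexShape.down ℤ).Rel (i + 1) (j + 1) := by
      simp only [ComplexShape.down_Rel] at h ⊢; omega
    try dsimp only
    rw [M.shape _ _ this, neg_zero]
  d_comp_d' i j k _ _ := by simp


/-- if `N_n` is in the subprojectivity domain of `M_n` for all `n`, and there is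
a short exact sequence `0 → K → P → N → 0` with `P` projective such that every chain map
`M[-1] → K` is null-homotopic, then `N` is in the subprojectivity domain of `M`. -/
theorem subprojDomain_of_homotopy
    {R : Type u} [Ring R] (M N : ChainComplex (ModuleCat.{u} R) ℤ)
    (hcomp : ∀ n : ℤ, SubprojDomain (M.X n) (N.X n))
    (P : ChainComplex (ModuleCat.{u} R) ℤ) (p : P ⟶ N) (hP : Projective P) (hp : Epi p)
    (h : ∀ g : shiftNegOne M ⟶ kernel p, Nonempty (Homotopy g 0)) :
    SubprojDomain M N := by
  intro f
  -- componentwise lifts of f along p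
  have hlift : ∀ n : ℤ, ∃ t : M.X n ⟶ P.X n, t ≫ p.f n = f.f n := by
    intro n
    obtain ⟨Q, hQ, a, b, hab⟩ := hcomp n (f.f n)
    haveI := hQ
    obtain ⟨c, hc⟩ := Projective.factors b (p.f n)
    exact ⟨a ≫ c, by rw [Category.assoc, hc, hab]⟩
  choose t ht using hlift
  set ι := kernel.ι p with hι
  -- the defect of t being a chain map
  set s : ∀ j : ℤ, M.X (j+1) ⟶ P.X j :=
    fun j => M.d (j+1) j ≫ t j - t (j+1) ≫ P.d (j+1) j with hsdef
  have hs : ∀ j, s j ≫ p.f j = 0 := by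
    intro j
    rw [hsdef]
    simp only [Preadditive.sub_comp, Category.assoc, ht]
    rw [← p.comm (j+1) j, ← Category.assoc, ht, f.comm, sub_self]
  -- kernel components
  set cmp : ∀ j : ℤ, (kernel p).X j ⟶ kernel (p.f j) :=
    fun j => kernelComparison p (HomologicalComplex.eval _ _ j) with hcmp
  have hcmpι : ∀ j, cmp j ≫ kernel.ι (p.f j) = ι.f j := by
    intro j
    exact kernelComparison_comp_ι p (HomologicalComplex.eval _ _ j)
  haveI : ∀ j : ℤ, IsIso (cmp j) := by intro j; have := (PreservesKernel.iso (HomologicalComplex.eval (ModuleCat R) (ComplexShape.down ℤ) j) p).isIso_hom; rw [PreservesKernel.iso_hom] at this; exact this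
  have hmono : ∀ j : ℤ, Mono (ι.f j) := by
    intro j
    rw [← hcmpι j]
    exact mono_comp _ _
  set g0 : ∀ j : ℤ, M.X (j+1) ⟶ (kernel p).X j :=
    fun j => kernel.lift (p.f j) (s j) (hs j) ≫ inv (cmp j) with hg0def
  have hg0 : ∀ j, g0 j ≫ ι.f j = s j := by
    intro j
    rw [hg0def, ← hcmpι j]
    simp
  -- the chain map M[-1] → ker p
  set g : shiftNegOne M ⟶ kernel p :=
    { f := fun j => g0 j
      comm' := by
        rintro i j (rfl : j + 1 = i)
        haveI := hmono j
        rw [← cancel_mono (ι.f j)]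
        have hc : (kernel p).d (j+1) j ≫ ι.f j = ι.f (j+1) ≫ P.d (j+1) j := (ι.comm (j+1) j).symm
        show (g0 (j+1) ≫ (kernel p).d (j+1) j) ≫ ι.f j = ((shiftNegOne M).d (j+1) j ≫ g0 j) ≫ ι.f j
        rw [Category.assoc, hc, ← Category.assoc, hg0 (j+1)]
        show s (j+1) ≫ P.d (j+1) j = ((shiftNegOne M).d (j+1) j ≫ g0 j) ≫ ι.f j
        have : (shiftNegOne M).d (j+1) j = -(M.d (j+1+1) (j+1)) := rfl
        rw [this]
        show s (j+1) ≫ P.d (j+1) j = ((-(M.d (j+1+1) (j+1))) ≫ g0 j) ≫ ι.f j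
        rw [Category.assoc, hg0 j]
        simp only [hsdef, Preadditive.sub_comp, Category.assoc,
          HomologicalComplex.d_comp_d, comp_zero, sub_zero,
          Preadditive.neg_comp, Preadditive.comp_sub,
          HomologicalComplex.d_comp_d_assoc, zero_comp, neg_sub, zero_sub,
          neg_zero, neg_neg, sub_neg_eq_add, zero_add]
      } with hgdef
  obtain ⟨H⟩ := h g
  -- casts
  have homcast : ∀ (i i' k : ℤ) (e : i = i'),
      H.hom i k = eqToHom (show (shiftNegOne M).X i = (shiftNegOne M).X i' by rw [e]) ≫ H.hom i' k := by
    rintro i i' k rfl; simp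
  have dcast : ∀ (i k k' : ℤ) (e : k = k'),
      M.d i k ≫ eqToHom (show M.X k = M.X k' by rw [e]) = M.d i k' := by
    rintro i k k' rfl; simp
  set h' : ∀ n : ℤ, M.X n ⟶ (kernel p).X n :=
    fun n => eqToHom (show M.X n = (shiftNegOne M).X (n-1) by
      show M.X n = M.X (n-1+1); congr 1; ring) ≫ H.hom (n-1) n with hh'
  have key : ∀ j : ℤ, h' (j+1) = H.hom j (j+1) := by
    intro j
    show eqToHom _ ≫ H.hom (j+1-1) (j+1) = H.hom j (j+1)
    rw [homcast (j+1-1) j (j+1) (by ring)]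
    rw [← Category.assoc]; erw [eqToHom_trans]; rw [eqToHom_refl, Category.id_comp]
  have key2 : ∀ j : ℤ, M.d (j+1) j ≫ h' j = M.d (j+1) (j-1+1) ≫ H.hom (j-1) j := by
    intro j
    show M.d (j+1) j ≫ eqToHom _ ≫ H.hom (j-1) j = _
    rw [← Category.assoc]
    congr 1
    exact dcast (j+1) j (j-1+1) (by ring)
  -- homotopy identity in convenient form
  have hcomm : ∀ j : ℤ, g0 j =
      -(M.d (j+1) (j-1+1) ≫ H.hom (j-1) j) +
        (H.hom j (j+1) ≫ (kernel p).d (j+1) j : M.X (j+1) ⟶ (kernel p).X j) := by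
    intro j
    have := H.comm j
    rw [dNext_eq H.hom (show (ComplexShape.down ℤ).Rel j (j-1) by simp),
        prevD_eq H.hom (show (ComplexShape.down ℤ).Rel (j+1) j by simp)] at this
    have h0 : (0 : shiftNegOne M ⟶ kernel p).f j = 0 := rfl
    rw [h0, add_zero] at this
    have hd : (shiftNegOne M).d j (j-1) = -(M.d (j+1) (j-1+1)) := rfl
    rw [hd] at this
    exact this.trans (congrArg (· + _) (Preadditive.neg_comp (M.d (j+1) (j-1+1)) (H.hom (j-1) j)))
  -- the corrected chain map
  set a : M ⟶ P :=
    { f := fun n => t n + h' n ≫ ι.f n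
      comm' := by
        rintro i j (rfl : j + 1 = i)
        have hc : (kernel p).d (j+1) j ≫ ι.f j = ι.f (j+1) ≫ P.d (j+1) j := (ι.comm (j+1) j).symm
        have e1 : (h' (j+1) ≫ (kernel p).d (j+1) j - M.d (j+1) j ≫ h' j) ≫ ι.f j = s j := by
          rw [← hg0 j, hcomm j, key j, key2 j]
          simp only [Preadditive.sub_comp, Preadditive.add_comp, Preadditive.neg_comp,
            Category.assoc]
          abel
        rw [hsdef] at e1
        simp only [Preadditive.sub_comp, Category.assoc] at e1
        simp only [Preadditive.add_comp, Preadditive.comp_add, Category.assoc]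
        rw [← hc, ← Category.assoc (h' (j+1))]
        rw [← Category.assoc (h' (j+1))] at e1
        -- e1 : h'(j+1) ≫ K.d ≫ ι - M.d ≫ h' j ≫ ι = M.d ≫ t j - t (j+1) ≫ P.d
        have := sub_eq_sub_iff_add_eq_add.mp e1
        -- rearrange
        linear_combination (norm := abel) this
      } with hadef
  refine ⟨P, hP, a, p, ?_⟩
  apply HomologicalComplex.hom_ext
  intro n
  show (t n + h' n ≫ ι.f n) ≫ p.f n = f.f n
  have : ι.f n ≫ p.f n = 0 := by
    rw [← HomologicalComplex.comp_f, kernel.condition]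
    rfl
  rw [Preadditive.add_comp, ht, Category.assoc, this, comp_zero, add_zero]
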